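/- arXiv:1607.04777 — 2 statements merged into one kernel-verified Lean document; each statement's English description precedes it below -/
import Mathlib

section
/- Given a digraph D, let T(D) be the 3-tropical graph constructed as follows: the vertex set of T(D) contains V(D), with all these vertices coloured Blue, and for each arc (u,v) of D, two new vertices x_{u,(u,v)} coloured Red and x_{v,(u,v)} coloured Green, together with the path u — x_{u,(u,v)} — x_{v,(u,v)} — v. Then for any two digraphs D₁ and D₂, there is a digraph homomorphism of D₁ to D₂ if and only if there is a tropical graph homomorphism of T(D₁) to T(D₂). -/
/-- The three colours used in the construction T(D). -/
inductive Colour3 : Type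
  | blue | red | green
  deriving DecidableEq

/-- The arcs of a digraph D, given as a relation. -/
def Arc {V : Type*} (D : V → V → Prop) : Type _ := {p : V × V // D p.1 p.2}

/-- Vertices of T(D): the original vertices, plus two new vertices for each arc
(`false` for the Red vertex x_u attached to the tail, `true` for the Green vertex x_v
attached to the head). -/
def TVert {V : Type*} (D : V → V → Prop) : Type _ := V ⊕ (Arc D × Bool)

/-- One direction of the adjacency of T(D): for each arc (u,v), the path
u — x_{u} — x_{v} — v. -/
def TAdjHalf {V : Type*} (D : V → V → Prop) : TVert D → TVert D → Prop
  | Sum.inl u, Sum.inr eb => eb.2 = false ∧ eb.1.1.1 = u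
  | Sum.inr eb, Sum.inr eb' => eb.1 = eb'.1 ∧ eb.2 = false ∧ eb'.2 = true
  | Sum.inr eb, Sum.inl v => eb.2 = true ∧ eb.1.1.2 = v
  | Sum.inl _, Sum.inl _ => False

/-- The graph T(D), obtained from D by replacing each arc (u,v) by a path
u — x_u — x_v — v of length 3. -/
def TGraph {V : Type*} (D : V → V → Prop) : SimpleGraph (TVert D) :=
  SimpleGraph.fromRel (TAdjHalf D)

/-- The colouring of T(D): original vertices are Blue, the x_u's are Red,
the x_v's are Green. -/
def TColour {V : Type*} (D : V → V → Prop) : TVert D → Colour3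
  | Sum.inl _ => Colour3.blue
  | Sum.inr (_, false) => Colour3.red
  | Sum.inr (_, true) => Colour3.green

/-- For any two digraphs D₁ and D₂, D₁ → D₂ iff T(D₁) → T(D₂) tropically. -/
theorem stmt4 {V₁ V₂ : Type*} (D₁ : V₁ → V₁ → Prop) (D₂ : V₂ → V₂ → Prop) :
    (∃ f : V₁ → V₂, ∀ u v, D₁ u v → D₂ (f u) (f v)) ↔
    (∃ g : TGraph D₁ →g TGraph D₂, ∀ x, TColour D₂ (g x) = TColour D₁ x) := by
  constructor
  · rintro ⟨f, hf⟩
    let G : TVert D₁ → TVert D₂ := fun x => match x with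
      | Sum.inl u => Sum.inl (f u)
      | Sum.inr (⟨(u, v), h⟩, b) => Sum.inr (⟨(f u, f v), hf u v h⟩, b)
    refine ⟨⟨G, ?_⟩, ?_⟩
    · rintro x y hxy
      rw [TGraph, SimpleGraph.fromRel_adj] at hxy ⊢
      obtain ⟨hne, hadj⟩ := hxy
      rcases x with u | ⟨⟨⟨u, v⟩, h⟩, b⟩ <;> rcases y with w | ⟨⟨⟨w, z⟩, h'⟩, b'⟩
      · simp [TAdjHalf] at hadj
      · rcases hadj with ⟨hb, ht⟩ | ⟨hb, ht⟩
        · subst hb; subst ht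
          exact ⟨by simp, Or.inl ⟨rfl, rfl⟩⟩
        · subst hb; subst ht
          exact ⟨by simp, Or.inr ⟨rfl, rfl⟩⟩
      · rcases hadj with ⟨hb, ht⟩ | ⟨hb, ht⟩
        · subst hb; subst ht
          exact ⟨by simp, Or.inl ⟨rfl, rfl⟩⟩
        · subst hb; subst ht
          exact ⟨by simp, Or.inr ⟨rfl, rfl⟩⟩
      · rcases hadj with ⟨he, hb, hb'⟩ | ⟨he, hb, hb'⟩
        · subst hb; subst hb'
          have hp : ((u, v) : V₁ × V₁) = (w, z) := Subtype.ext_iff.mp he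
          have h1 : u = w := congrArg Prod.fst hp
          have h2 : v = z := congrArg Prod.snd hp
          subst h1; subst h2
          refine ⟨fun hq => ?_, Or.inl ⟨rfl, rfl, rfl⟩⟩
          exact absurd (congrArg (TColour D₂) hq) (by simp [TColour])
        · subst hb; subst hb'
          have hp : ((w, z) : V₁ × V₁) = (u, v) := Subtype.ext_iff.mp he
          have h1 : w = u := congrArg Prod.fst hp
          have h2 : z = v := congrArg Prod.snd hp
          subst h1; subst h2
          refine ⟨fun hq => ?_, Or.inr ⟨rfl, rfl, rfl⟩⟩
          exact absurd (congrArg (TColour D₂) hq) (by simp [TColour])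
    · rintro (u | ⟨⟨⟨u, v⟩, h⟩, b⟩)
      · rfl
      · cases b <;> rfl
  · rintro ⟨g, hg⟩
    have hblue : ∀ u, ∃ w, g (Sum.inl u) = Sum.inl w := by
      intro u
      have hc := hg (Sum.inl u)
      cases hgu : g (Sum.inl u) with
      | inl w => exact ⟨w, rfl⟩
      | inr eb =>
        rw [hgu] at hc
        rcases eb with ⟨e, b⟩
        cases b <;> simp [TColour] at hc
    choose f hf using hblue
    refine ⟨f, fun u v huv => ?_⟩
    set e : Arc D₁ := ⟨(u, v), huv⟩ with he
    -- colours of the internal vertices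
    have hr : ∃ e₂ : Arc D₂, g (Sum.inr (e, false)) = Sum.inr (e₂, false) := by
      have hc := hg (Sum.inr (e, false))
      cases hge : g (Sum.inr (e, false)) with
      | inl w => rw [hge] at hc; simp [TColour] at hc
      | inr eb =>
        rw [hge] at hc
        rcases eb with ⟨e₂, b⟩
        cases b
        · exact ⟨e₂, rfl⟩
        · simp [TColour] at hc
    have hgn : ∃ e₂ : Arc D₂, g (Sum.inr (e, true)) = Sum.inr (e₂, true) := by
      have hc := hg (Sum.inr (e, true))
      cases hge : g (Sum.inr (e, true)) with
      | inl w => rw [hge] at hc; simp [TColour] at hc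
      | inr eb =>
        rw [hge] at hc
        rcases eb with ⟨e₂, b⟩
        cases b
        · simp [TColour] at hc
        · exact ⟨e₂, rfl⟩
    obtain ⟨e₂, he₂⟩ := hr
    obtain ⟨e₃, he₃⟩ := hgn
    -- the three adjacencies in T(D₁)
    have a1 : (TGraph D₁).Adj (Sum.inl u) (Sum.inr (e, false)) := by
      simp only [TGraph, SimpleGraph.fromRel_adj]
      exact ⟨Sum.inl_ne_inr, Or.inl ⟨rfl, rfl⟩⟩
    have a2 : (TGraph D₁).Adj (Sum.inr (e, false)) (Sum.inr (e, true)) := by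
      simp only [TGraph, SimpleGraph.fromRel_adj]
      refine ⟨fun hq => ?_, Or.inl ⟨rfl, rfl, rfl⟩⟩
      exact absurd (congrArg (TColour D₁) hq) (by simp [TColour])
    have a3 : (TGraph D₁).Adj (Sum.inr (e, true)) (Sum.inl v) := by
      simp only [TGraph, SimpleGraph.fromRel_adj]
      exact ⟨Sum.inr_ne_inl, Or.inl ⟨rfl, rfl⟩⟩
    have b1 := g.map_adj a1
    have b2 := g.map_adj a2
    have b3 := g.map_adj a3
    rw [hf u, he₂] at b1; simp only [TGraph, SimpleGraph.fromRel_adj] at b1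
    rw [he₂, he₃] at b2; simp only [TGraph, SimpleGraph.fromRel_adj] at b2
    rw [he₃, hf v] at b3; simp only [TGraph, SimpleGraph.fromRel_adj] at b3
    have h1 : e₂.1.1 = f u := by
      rcases b1.2 with ⟨_, h⟩ | ⟨h, _⟩
      · exact h
      · simp at h
    have h23 : e₂ = e₃ := by
      rcases b2.2 with ⟨h, _⟩ | ⟨_, _, h⟩
      · exact h
      · simp at h
    have h3 : e₃.1.2 = f v := by
      rcases b3.2 with ⟨_, h⟩ | ⟨h, _⟩
      · exact h
      · simp at h
    have := e₂.2
    rw [h1, h23, h3] at this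
    exact this
end

section
/- Let x₀x₁⋯x₈ be a path P of length 8 whose vertices are coloured as follows: x₀ and x₈ receive colours from {Green, Blue} with c(x₀) ≠ c(x₈), x₅ is Red, and all other vertices are Yellow. Let u₀u₁⋯u₈ be another path P' coloured by the same rule (u₀,u₈ ∈ {Green,Blue} with distinct colours, u₅ Red, the rest Yellow). Then there is a tropical homomorphism of P to P' if and only if c(x₀) = c(u₀) and c(x₈) = c(u₈). -/
/-- Four distinct colours. -/
inductive Colour4 : Type
  | green | blue | red | yellow
  deriving DecidableEq

/-- The colouring pattern of the path P_{x,y} on 9 vertices: the two endpoints get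
distinct colours from {Green, Blue}, vertex 5 is Red, all other vertices are Yellow. -/
def PPathColouring (c : Fin 9 → Colour4) : Prop :=
  (c 0 = Colour4.green ∨ c 0 = Colour4.blue) ∧
  (c 8 = Colour4.green ∨ c 8 = Colour4.blue) ∧
  c 0 ≠ c 8 ∧ c 5 = Colour4.red ∧
  ∀ i : Fin 9, i ≠ 0 → i ≠ 5 → i ≠ 8 → c i = Colour4.yellow

lemma red_loc (c : Fin 9 → Colour4) (hc : PPathColouring c) (j : Fin 9)
    (h : c j = Colour4.red) : j = 5 := by
  obtain ⟨h0, h8, _, _, hy⟩ := hc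
  by_contra hj
  by_cases hj0 : j = 0
  · subst hj0; rcases h0 with h0 | h0 <;> rw [h0] at h <;> exact Colour4.noConfusion h
  by_cases hj8 : j = 8
  · subst hj8; rcases h8 with h8 | h8 <;> rw [h8] at h <;> exact Colour4.noConfusion h
  · rw [hy j hj0 hj hj8] at h; exact Colour4.noConfusion h

lemma gb_loc (c : Fin 9 → Colour4) (hc : PPathColouring c) (j : Fin 9)
    (h : c j = Colour4.green ∨ c j = Colour4.blue) : j = 0 ∨ j = 8 := by
  obtain ⟨_, _, _, h5, hy⟩ := hc
  by_contra hj
  push_neg at hj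
  by_cases hj5 : j = 5
  · subst hj5; rw [h5] at h; rcases h with h | h <;> exact Colour4.noConfusion h
  · rw [hy j hj.1 hj5 hj.2] at h; rcases h with h | h <;> exact Colour4.noConfusion h

lemma yellow_loc (c : Fin 9 → Colour4) (hc : PPathColouring c) (j : Fin 9)
    (h : c j = Colour4.yellow) : j ≠ 0 ∧ j ≠ 5 ∧ j ≠ 8 := by
  obtain ⟨h0, h8, _, h5, _⟩ := hc
  refine ⟨?_, ?_, ?_⟩ <;> rintro rfl
  · rcases h0 with h0 | h0 <;> rw [h0] at h <;> exact Colour4.noConfusion h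
  · rw [h5] at h; exact Colour4.noConfusion h
  · rcases h8 with h8 | h8 <;> rw [h8] at h <;> exact Colour4.noConfusion h

/-- P maps tropically to P' iff the endpoint colours match. -/
theorem stmt12 (c c' : Fin 9 → Colour4) (hc : PPathColouring c) (hc' : PPathColouring c') :
    (∃ f : SimpleGraph.pathGraph 9 →g SimpleGraph.pathGraph 9, ∀ v, c' (f v) = c v) ↔
    (c 0 = c' 0 ∧ c 8 = c' 8) := by
  constructor
  · rintro ⟨f, hf⟩
    obtain ⟨h0, h8, hne, h5, hy⟩ := hc
    -- f 5 = 5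
    have hf5 : f 5 = 5 := red_loc c' hc' (f 5) (by rw [hf 5]; exact h5)
    -- adjacency facts
    have a56 : (SimpleGraph.pathGraph 9).Adj (f 5) (f 6) :=
      f.map_adj (SimpleGraph.pathGraph_adj.mpr (Or.inl rfl))
    have a67 : (SimpleGraph.pathGraph 9).Adj (f 6) (f 7) :=
      f.map_adj (SimpleGraph.pathGraph_adj.mpr (Or.inl rfl))
    have a78 : (SimpleGraph.pathGraph 9).Adj (f 7) (f 8) :=
      f.map_adj (SimpleGraph.pathGraph_adj.mpr (Or.inl rfl))
    have v56 := SimpleGraph.pathGraph_adj.mp a56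
    have v67 := SimpleGraph.pathGraph_adj.mp a67
    have v78 := SimpleGraph.pathGraph_adj.mp a78
    rw [hf5] at v56
    have y7 : (f 7) ≠ 0 ∧ (f 7) ≠ 5 ∧ (f 7) ≠ 8 :=
      yellow_loc c' hc' (f 7) (by rw [hf 7]; exact hy 7 (by decide) (by decide) (by decide))
    have g8 : f 8 = 0 ∨ f 8 = 8 := gb_loc c' hc' (f 8) (by rw [hf 8]; exact h8)
    have g0 : f 0 = 0 ∨ f 0 = 8 := gb_loc c' hc' (f 0) (by rw [hf 0]; exact h0)
    -- convert to val statements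
    have y7v : (f 7).val ≠ 0 ∧ (f 7).val ≠ 5 ∧ (f 7).val ≠ 8 := by
      refine ⟨fun h => y7.1 ?_, fun h => y7.2.1 ?_, fun h => y7.2.2 ?_⟩ <;>
        exact Fin.ext h
    have g8v : (f 8).val = 0 ∨ (f 8).val = 8 := by
      rcases g8 with h | h <;> rw [h] <;> [exact Or.inl rfl; exact Or.inr rfl]
    have hf8 : f 8 = 8 := by
      apply Fin.ext
      show (f 8).val = 8
      omega
    have hc8 : c 8 = c' 8 := by rw [← hf 8, hf8]
    refine ⟨?_, hc8⟩
    rcases g0 with h | h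
    · rw [← hf 0, h]
    · exfalso
      apply hne
      rw [← hf 0, h]
      exact hc8.symm
  · rintro ⟨h0, h8⟩
    refine ⟨SimpleGraph.Hom.id, fun v => ?_⟩
    show c' v = c v
    obtain ⟨_, _, _, h5, hy⟩ := hc
    obtain ⟨_, _, _, h5', hy'⟩ := hc'
    fin_cases v
    · exact h0.symm
    · exact (hy' 1 (by decide) (by decide) (by decide)).trans (hy 1 (by decide) (by decide) (by decide)).symm
    · exact (hy' 2 (by decide) (by decide) (by decide)).trans (hy 2 (by decide) (by decide) (by decide)).symm
    · exact (hy' 3 (by decide) (by decide) (by decide)).trans (hy 3 (by decide) (by decide) (by decide)).symm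
    · exact (hy' 4 (by decide) (by decide) (by decide)).trans (hy 4 (by decide) (by decide) (by decide)).symm
    · exact h5'.trans h5.symm
    · exact (hy' 6 (by decide) (by decide) (by decide)).trans (hy 6 (by decide) (by decide) (by decide)).symm
    · exact (hy' 7 (by decide) (by decide) (by decide)).trans (hy 7 (by decide) (by decide) (by decide)).symm
    · exact h8.symm
end
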